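/- Let G be a free group on generators x, y (or a subgroup of a free group on three generators) and n ≥ 1 with n_6 = n/gcd(n,6). Then [[x,y],x]^{n_6} and [[x,y],y]^{n_6} lie in G^(4),n = G^(4)·G^n. -/

import Mathlib

/-- The commutator `[a,b] = a⁻¹ b⁻¹ a b`. -/
def commP {G : Type*} [Group G] (a b : G) : G := a⁻¹ * b⁻¹ * a * b

/-- The subgroup generated by `n`-th powers. -/
def powSubgroup (G : Type*) [Group G] (n : ℕ) : Subgroup G :=
  Subgroup.closure {x : G | ∃ g : G, g ^ n = x}

section CommCalc
variable {Q : Type*} [Group Q]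

lemma mul_comm_commP (u r : Q) : u * r = r * u * commP u r := by
  simp only [commP]; group

lemma commP_swap (p q : Q) : commP q p = (commP p q)⁻¹ := by
  simp only [commP]; group

lemma commP_one_left (q : Q) : commP 1 q = 1 := by simp [commP]

lemma conj_eq_mul_commP (p q : Q) : q⁻¹ * p * q = p * commP p q := by
  simp only [commP]; group

lemma central_inv (z : Q) (hz : ∀ s : Q, z * s = s * z) : ∀ s : Q, z⁻¹ * s = s * z⁻¹ :=
  fun s => (Commute.inv_left (hz s)).eq

lemma central_pow (z : Q) (hz : ∀ s : Q, z * s = s * z) (m : ℕ) :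
    ∀ s : Q, z ^ m * s = s * z ^ m :=
  fun s => (Commute.pow_left (hz s) m).eq

lemma commP_inv_left (u v : Q) (h : ∀ s : Q, commP u v * s = s * commP u v) :
    commP u⁻¹ v = (commP u v)⁻¹ := by
  have h1 : v⁻¹ * u * v = u * commP u v := conj_eq_mul_commP u v
  have h2 : v⁻¹ * u⁻¹ * v = (commP u v)⁻¹ * u⁻¹ := by
    calc v⁻¹ * u⁻¹ * v = (v⁻¹ * u * v)⁻¹ := by group
    _ = (u * commP u v)⁻¹ := by rw [h1]
    _ = (commP u v)⁻¹ * u⁻¹ := by rw [mul_inv_rev]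
  calc commP u⁻¹ v = u * (v⁻¹ * u⁻¹ * v) := by simp only [commP]; group
  _ = u * ((commP u v)⁻¹ * u⁻¹) := by rw [h2]
  _ = u * (u⁻¹ * (commP u v)⁻¹) := by rw [central_inv _ h u⁻¹]
  _ = (commP u v)⁻¹ := by group

lemma inv_move (x y z : Q) (h : x * y = y * x * z) (hz : ∀ s : Q, z * s = s * z) :
    x⁻¹ * y = y * x⁻¹ * z⁻¹ := by
  have h1 : x * y * z⁻¹ = y * x := by rw [h]; group
  calc x⁻¹ * y = x⁻¹ * (y * x) * x⁻¹ := by group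
  _ = x⁻¹ * (x * y * z⁻¹) * x⁻¹ := by rw [h1]
  _ = y * z⁻¹ * x⁻¹ := by group
  _ = y * x⁻¹ * z⁻¹ := by rw [mul_assoc, central_inv z hz x⁻¹, mul_assoc]

lemma move_pow_left (x y z : Q) (h : x * y = y * x * z) (hz : ∀ s : Q, z * s = s * z) :
    ∀ k : ℕ, x ^ k * y = y * x ^ k * z ^ k := by
  intro k; induction k with
  | zero => simp
  | succ k ih =>
    calc x ^ (k+1) * y = x * (x ^ k * y) := by rw [pow_succ']; group
    _ = x * (y * x ^ k * z ^ k) := by rw [ih]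
    _ = (x * y) * (x ^ k * z ^ k) := by group
    _ = (y * x * z) * (x ^ k * z ^ k) := by rw [h]
    _ = y * x * (z * x ^ k) * z ^ k := by group
    _ = y * x * (x ^ k * z) * z ^ k := by rw [hz]
    _ = y * x ^ (k+1) * z ^ (k+1) := by rw [pow_succ' x, pow_succ' z]; group

lemma move_pow_right (x y z : Q) (h : x * y = y * x * z) (hz : ∀ s : Q, z * s = s * z) :
    ∀ l : ℕ, x * y ^ l = y ^ l * x * z ^ l := by
  intro l; induction l with
  | zero => simp
  | succ l ih =>
    calc x * y ^ (l+1) = (x * y) * y ^ l := by rw [pow_succ']; group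
    _ = (y * x * z) * y ^ l := by rw [h]
    _ = y * x * (z * y ^ l) := by group
    _ = y * x * (y ^ l * z) := by rw [hz]
    _ = y * (x * y ^ l) * z := by group
    _ = y * (y ^ l * x * z ^ l) * z := by rw [ih]
    _ = y ^ (l+1) * x * z ^ (l+1) := by rw [pow_succ' y, pow_succ z]; group

end CommCalc

section Engine
variable {Q : Type*} [Group Q]
variable (hc : ∀ p q r s : Q, commP (commP p q) r * s = s * commP (commP p q) r)

include hc

/-- `[p^k, q] = [p,q]^k [[p,q],p]^{C(k,2)}` -/
lemma commP_pow_left (p q : Q) : ∀ k : ℕ,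
    commP (p ^ k) q = (commP p q) ^ k * (commP (commP p q) p) ^ (k.choose 2) := by
  set c := commP p q with hcdef
  set d := commP c p with hddef
  have hd : ∀ s : Q, d * s = s * d := hc p q p
  intro k; induction k with
  | zero => simp [commP_one_left]
  | succ k ih =>
    have h1 : c * p ^ k = p ^ k * c * d ^ k :=
      move_pow_right c p d (mul_comm_commP c p) hd k
    have h2 : p ^ k * commP (p ^ (k+1)) q = (c * p ^ k) * commP (p ^ k) q := by
      simp only [hcdef, commP, pow_succ']; group
    have key : commP (p ^ (k+1)) q = c * d ^ k * commP (p ^ k) q := by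
      calc commP (p ^ (k+1)) q
          = (p ^ k)⁻¹ * (p ^ k * commP (p ^ (k+1)) q) := by group
        _ = (p ^ k)⁻¹ * ((c * p ^ k) * commP (p ^ k) q) := by rw [h2]
        _ = (p ^ k)⁻¹ * ((p ^ k * c * d ^ k) * commP (p ^ k) q) := by rw [h1]
        _ = c * d ^ k * commP (p ^ k) q := by group
    rw [key, ih]
    calc c * d ^ k * (c ^ k * d ^ (k.choose 2))
        = c * (d ^ k * c ^ k) * d ^ (k.choose 2) := by group
      _ = c * (c ^ k * d ^ k) * d ^ (k.choose 2) := by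
            rw [central_pow d hd k (c ^ k)]
      _ = (c * c ^ k) * (d ^ k * d ^ (k.choose 2)) := by group
      _ = c ^ (k+1) * d ^ (k + k.choose 2) := by rw [← pow_succ', ← pow_add]
      _ = c ^ (k+1) * d ^ ((k+1).choose 2) := by
            rw [Nat.choose_succ_succ, Nat.choose_one_right]

/-- `q^j p = p q^j [p,q]^{-j} [[p,q],q]^{-C(j,2)}` -/
lemma pow_move_main (p q : Q) : ∀ j : ℕ,
    q ^ j * p = p * q ^ j * ((commP p q)⁻¹) ^ j *
      ((commP (commP p q) q)⁻¹) ^ (j.choose 2) := by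
  set c := commP p q with hcdef
  set e := commP c q with hedef
  have he : ∀ s : Q, e * s = s * e := hc p q q
  have he' : ∀ s : Q, e⁻¹ * s = s * e⁻¹ := central_inv e he
  have hCq : c⁻¹ * q = q * c⁻¹ * e⁻¹ := inv_move c q e (mul_comm_commP c q) he
  have hqp : q * p = p * q * c⁻¹ := by
    rw [mul_comm_commP q p, commP_swap, hcdef]
  intro j; induction j with
  | zero => simp
  | succ j ih =>
    calc q ^ (j+1) * p = q * (q ^ j * p) := by rw [pow_succ']; group
      _ = q * (p * q ^ j * (c⁻¹) ^ j * (e⁻¹) ^ (j.choose 2)) := by rw [ih]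
      _ = (q * p) * (q ^ j * (c⁻¹) ^ j * (e⁻¹) ^ (j.choose 2)) := by group
      _ = (p * q * c⁻¹) * (q ^ j * (c⁻¹) ^ j * (e⁻¹) ^ (j.choose 2)) := by rw [hqp]
      _ = p * q * (c⁻¹ * q ^ j) * ((c⁻¹) ^ j * (e⁻¹) ^ (j.choose 2)) := by group
      _ = p * q * (q ^ j * c⁻¹ * (e⁻¹) ^ j) * ((c⁻¹) ^ j * (e⁻¹) ^ (j.choose 2)) := by
            rw [move_pow_right c⁻¹ q e⁻¹ hCq he' j]
      _ = p * (q * q ^ j) * c⁻¹ * ((e⁻¹) ^ j * (c⁻¹) ^ j) * (e⁻¹) ^ (j.choose 2) := by group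
      _ = p * (q * q ^ j) * c⁻¹ * ((c⁻¹) ^ j * (e⁻¹) ^ j) * (e⁻¹) ^ (j.choose 2) := by
            rw [central_pow e⁻¹ he' j ((c⁻¹) ^ j)]
      _ = p * (q * q ^ j) * (c⁻¹ * (c⁻¹) ^ j) * ((e⁻¹) ^ j * (e⁻¹) ^ (j.choose 2)) := by group
      _ = p * q ^ (j+1) * (c⁻¹) ^ (j+1) * (e⁻¹) ^ (j + j.choose 2) := by
            rw [← pow_succ', ← pow_succ', ← pow_add]
      _ = p * q ^ (j+1) * (c⁻¹) ^ (j+1) * (e⁻¹) ^ ((j+1).choose 2) := by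
            rw [Nat.choose_succ_succ, Nat.choose_one_right]

/-- Hall–Petrescu style expansion of `(pq)^k` in a class-3 group. -/
lemma mul_pow_expand (p q : Q) : ∀ k : ℕ,
    (p * q) ^ k = p ^ k * q ^ k * ((commP p q)⁻¹) ^ (k.choose 2) *
      ((commP (commP p q) p)⁻¹) ^ (k.choose 3) *
      ((commP (commP p q) q)⁻¹) ^ (2 * k.choose 3 + k.choose 2) := by
  set c := commP p q with hcdef
  set d := commP c p with hddef
  set e := commP c q with hedef
  have hd : ∀ s : Q, d * s = s * d := hc p q p
  have he : ∀ s : Q, e * s = s * e := hc p q q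
  have hd' : ∀ s : Q, d⁻¹ * s = s * d⁻¹ := central_inv d hd
  have he' : ∀ s : Q, e⁻¹ * s = s * e⁻¹ := central_inv e he
  have hCp : c⁻¹ * p = p * c⁻¹ * d⁻¹ := inv_move c p d (mul_comm_commP c p) hd
  have hCq : c⁻¹ * q = q * c⁻¹ * e⁻¹ := inv_move c q e (mul_comm_commP c q) he
  intro k; induction k with
  | zero => simp
  | succ k ih =>
    have e1 : (k+1).choose 2 = k + k.choose 2 := by
      rw [Nat.choose_succ_succ, Nat.choose_one_right]
    have e2 : (k+1).choose 3 = k.choose 2 + k.choose 3 := Nat.choose_succ_succ _ _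
    have e3 : 2 * (k+1).choose 3 + (k+1).choose 2
        = k + (k.choose 2 + k.choose 2) + (2 * k.choose 3 + k.choose 2) := by
      rw [e1, e2]; ring
    calc (p * q) ^ (k+1) = (p * q) ^ k * (p * q) := by rw [pow_succ]
      _ = (p ^ k * q ^ k * (c⁻¹) ^ (k.choose 2) * (d⁻¹) ^ (k.choose 3) *
            (e⁻¹) ^ (2 * k.choose 3 + k.choose 2)) * (p * q) := by rw [ih]
      _ = p ^ k * q ^ k * (c⁻¹) ^ (k.choose 2) * (d⁻¹) ^ (k.choose 3) *
            ((e⁻¹) ^ (2 * k.choose 3 + k.choose 2) * p) * q := by group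
      _ = p ^ k * q ^ k * (c⁻¹) ^ (k.choose 2) * (d⁻¹) ^ (k.choose 3) *
            (p * (e⁻¹) ^ (2 * k.choose 3 + k.choose 2)) * q := by
            rw [central_pow e⁻¹ he' (2 * k.choose 3 + k.choose 2) p]
      _ = p ^ k * q ^ k * (c⁻¹) ^ (k.choose 2) * ((d⁻¹) ^ (k.choose 3) * p) *
            ((e⁻¹) ^ (2 * k.choose 3 + k.choose 2) * q) := by group
      _ = p ^ k * q ^ k * (c⁻¹) ^ (k.choose 2) * (p * (d⁻¹) ^ (k.choose 3)) *
            (q * (e⁻¹) ^ (2 * k.choose 3 + k.choose 2)) := by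
            rw [central_pow d⁻¹ hd' (k.choose 3) p,
                central_pow e⁻¹ he' (2 * k.choose 3 + k.choose 2) q]
      _ = p ^ k * q ^ k * ((c⁻¹) ^ (k.choose 2) * p) * ((d⁻¹) ^ (k.choose 3) * q) *
            (e⁻¹) ^ (2 * k.choose 3 + k.choose 2) := by group
      _ = p ^ k * q ^ k * (p * (c⁻¹) ^ (k.choose 2) * (d⁻¹) ^ (k.choose 2)) *
            (q * (d⁻¹) ^ (k.choose 3)) * (e⁻¹) ^ (2 * k.choose 3 + k.choose 2) := by
            rw [move_pow_left c⁻¹ p d⁻¹ hCp hd' (k.choose 2),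
                central_pow d⁻¹ hd' (k.choose 3) q]
      _ = p ^ k * q ^ k * p * (c⁻¹) ^ (k.choose 2) * ((d⁻¹) ^ (k.choose 2) * q) *
            (d⁻¹) ^ (k.choose 3) * (e⁻¹) ^ (2 * k.choose 3 + k.choose 2) := by group
      _ = p ^ k * q ^ k * p * (c⁻¹) ^ (k.choose 2) * (q * (d⁻¹) ^ (k.choose 2)) *
            (d⁻¹) ^ (k.choose 3) * (e⁻¹) ^ (2 * k.choose 3 + k.choose 2) := by
            rw [central_pow d⁻¹ hd' (k.choose 2) q]
      _ = p ^ k * q ^ k * p * ((c⁻¹) ^ (k.choose 2) * q) *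
            ((d⁻¹) ^ (k.choose 2) * (d⁻¹) ^ (k.choose 3)) *
            (e⁻¹) ^ (2 * k.choose 3 + k.choose 2) := by group
      _ = p ^ k * q ^ k * p * (q * (c⁻¹) ^ (k.choose 2) * (e⁻¹) ^ (k.choose 2)) *
            ((d⁻¹) ^ (k.choose 2) * (d⁻¹) ^ (k.choose 3)) *
            (e⁻¹) ^ (2 * k.choose 3 + k.choose 2) := by
            rw [move_pow_left c⁻¹ q e⁻¹ hCq he' (k.choose 2)]
      _ = p ^ k * (q ^ k * p) * q * (c⁻¹) ^ (k.choose 2) * (e⁻¹) ^ (k.choose 2) *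
            ((d⁻¹) ^ (k.choose 2) * (d⁻¹) ^ (k.choose 3)) *
            (e⁻¹) ^ (2 * k.choose 3 + k.choose 2) := by group
      _ = p ^ k * (p * q ^ k * ((commP p q)⁻¹) ^ k *
              ((commP (commP p q) q)⁻¹) ^ (k.choose 2)) * q *
            (c⁻¹) ^ (k.choose 2) * (e⁻¹) ^ (k.choose 2) *
            ((d⁻¹) ^ (k.choose 2) * (d⁻¹) ^ (k.choose 3)) *
            (e⁻¹) ^ (2 * k.choose 3 + k.choose 2) := by
            rw [pow_move_main hc p q k]
      _ = (p ^ k * p) * q ^ k * (c⁻¹) ^ k * ((e⁻¹) ^ (k.choose 2) * q) *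
            (c⁻¹) ^ (k.choose 2) * (e⁻¹) ^ (k.choose 2) *
            ((d⁻¹) ^ (k.choose 2) * (d⁻¹) ^ (k.choose 3)) *
            (e⁻¹) ^ (2 * k.choose 3 + k.choose 2) := by rw [← hcdef, ← hedef]; group
      _ = (p ^ k * p) * q ^ k * (c⁻¹) ^ k * (q * (e⁻¹) ^ (k.choose 2)) *
            (c⁻¹) ^ (k.choose 2) * (e⁻¹) ^ (k.choose 2) *
            ((d⁻¹) ^ (k.choose 2) * (d⁻¹) ^ (k.choose 3)) *
            (e⁻¹) ^ (2 * k.choose 3 + k.choose 2) := by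
            rw [central_pow e⁻¹ he' (k.choose 2) q]
      _ = (p ^ k * p) * q ^ k * ((c⁻¹) ^ k * q) * ((e⁻¹) ^ (k.choose 2) *
            (c⁻¹) ^ (k.choose 2)) * (e⁻¹) ^ (k.choose 2) *
            ((d⁻¹) ^ (k.choose 2) * (d⁻¹) ^ (k.choose 3)) *
            (e⁻¹) ^ (2 * k.choose 3 + k.choose 2) := by group
      _ = (p ^ k * p) * q ^ k * (q * (c⁻¹) ^ k * (e⁻¹) ^ k) * ((c⁻¹) ^ (k.choose 2) *
            (e⁻¹) ^ (k.choose 2)) * (e⁻¹) ^ (k.choose 2) *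
            ((d⁻¹) ^ (k.choose 2) * (d⁻¹) ^ (k.choose 3)) *
            (e⁻¹) ^ (2 * k.choose 3 + k.choose 2) := by
            rw [move_pow_left c⁻¹ q e⁻¹ hCq he' k,
                central_pow e⁻¹ he' (k.choose 2) ((c⁻¹) ^ (k.choose 2))]
      _ = (p ^ k * p) * (q ^ k * q) * (c⁻¹) ^ k * ((e⁻¹) ^ k * (c⁻¹) ^ (k.choose 2)) *
            ((e⁻¹) ^ (k.choose 2) * (e⁻¹) ^ (k.choose 2)) *
            ((d⁻¹) ^ (k.choose 2) * (d⁻¹) ^ (k.choose 3)) *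
            (e⁻¹) ^ (2 * k.choose 3 + k.choose 2) := by group
      _ = (p ^ k * p) * (q ^ k * q) * (c⁻¹) ^ k * ((c⁻¹) ^ (k.choose 2) * (e⁻¹) ^ k) *
            ((e⁻¹) ^ (k.choose 2) * (e⁻¹) ^ (k.choose 2)) *
            ((d⁻¹) ^ (k.choose 2) * (d⁻¹) ^ (k.choose 3)) *
            (e⁻¹) ^ (2 * k.choose 3 + k.choose 2) := by
            rw [central_pow e⁻¹ he' k ((c⁻¹) ^ (k.choose 2))]
      _ = (p ^ k * p) * (q ^ k * q) * ((c⁻¹) ^ k * (c⁻¹) ^ (k.choose 2)) *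
            (((e⁻¹) ^ k * ((e⁻¹) ^ (k.choose 2) * (e⁻¹) ^ (k.choose 2))) *
              ((d⁻¹) ^ (k.choose 2) * (d⁻¹) ^ (k.choose 3))) *
            (e⁻¹) ^ (2 * k.choose 3 + k.choose 2) := by group
      _ = p ^ (k+1) * q ^ (k+1) * (c⁻¹) ^ (k + k.choose 2) *
            ((e⁻¹) ^ (k + (k.choose 2 + k.choose 2)) *
              (d⁻¹) ^ (k.choose 2 + k.choose 3)) *
            (e⁻¹) ^ (2 * k.choose 3 + k.choose 2) := by
            simp only [← pow_succ, ← pow_add]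
      _ = p ^ (k+1) * q ^ (k+1) * (c⁻¹) ^ (k + k.choose 2) *
            ((d⁻¹) ^ (k.choose 2 + k.choose 3) *
              (e⁻¹) ^ (k + (k.choose 2 + k.choose 2))) *
            (e⁻¹) ^ (2 * k.choose 3 + k.choose 2) := by
            rw [← central_pow d⁻¹ hd' (k.choose 2 + k.choose 3)
                ((e⁻¹) ^ (k + (k.choose 2 + k.choose 2)))]
      _ = p ^ (k+1) * q ^ (k+1) * (c⁻¹) ^ (k + k.choose 2) *
            (d⁻¹) ^ (k.choose 2 + k.choose 3) *
            ((e⁻¹) ^ (k + (k.choose 2 + k.choose 2)) *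
              (e⁻¹) ^ (2 * k.choose 3 + k.choose 2)) := by group
      _ = p ^ (k+1) * q ^ (k+1) * (c⁻¹) ^ (k + k.choose 2) *
            (d⁻¹) ^ (k.choose 2 + k.choose 3) *
            (e⁻¹) ^ (k + (k.choose 2 + k.choose 2) + (2 * k.choose 3 + k.choose 2)) := by
            rw [← pow_add]
      _ = p ^ (k+1) * q ^ (k+1) * (c⁻¹) ^ ((k+1).choose 2) *
            (d⁻¹) ^ ((k+1).choose 3) *
            (e⁻¹) ^ (2 * (k+1).choose 3 + (k+1).choose 2) := by rw [e3, e1, e2]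

end Engine

section Numeric

lemma two_mul_choose_two : ∀ n : ℕ, 2 * n.choose 2 = n * (n - 1) := by
  intro n; induction n with
  | zero => rfl
  | succ n ih =>
    rw [Nat.choose_succ_succ, Nat.mul_add, ih, Nat.choose_one_right, Nat.add_sub_cancel]
    cases n with
    | zero => rfl
    | succ m => simp only [Nat.add_sub_cancel]; ring

lemma six_mul_choose_three : ∀ n : ℕ, 6 * n.choose 3 = n * (n - 1) * (n - 2) := by
  intro n; induction n with
  | zero => rfl
  | succ n ih =>
    rw [Nat.choose_succ_succ, Nat.mul_add, ih, Nat.add_sub_cancel,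
      show (6 : ℕ) = 3 * 2 from rfl, Nat.mul_assoc, two_mul_choose_two]
    cases n with
    | zero => rfl
    | succ m =>
      cases m with
      | zero => rfl
      | succ r =>
        have e1 : r + 1 + 1 - 1 = r + 1 := by omega
        have e2 : r + 1 + 1 - 2 = r := by omega
        have e3 : r + 1 + 1 + 1 - 2 = r + 1 := by omega
        simp only [Nat.add_sub_cancel, e1, e2, e3]
        ring

lemma choose_two_int (n : ℕ) (hn : 1 ≤ n) :
    2 * (n.choose 2 : ℤ) = (n : ℤ) * ((n : ℤ) - 1) := by
  have h := two_mul_choose_two n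
  zify [hn] at h
  exact h

lemma choose_three_int (n : ℕ) (hn : 2 ≤ n) :
    6 * (n.choose 3 : ℤ) = (n : ℤ) * ((n : ℤ) - 1) * ((n : ℤ) - 2) := by
  have h := six_mul_choose_three n
  zify [hn, le_trans (by norm_num : (1:ℕ) ≤ 2) hn] at h
  exact h

lemma key_dvd (n m : ℕ) (hn : 1 ≤ n) (h1 : m ∣ n) (h2 : m ∣ n.choose 2)
    (h3 : m ∣ 2 * n.choose 3) : m ∣ n / Nat.gcd n 6 := by
  have hg : Nat.gcd n 6 = Nat.gcd (n % 6) 6 := by rw [Nat.gcd_comm, Nat.gcd_rec]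
  have hmn : (m : ℤ) ∣ (n : ℤ) := Int.natCast_dvd_natCast.mpr h1
  have hmc2 : (m : ℤ) ∣ (n.choose 2 : ℤ) := Int.natCast_dvd_natCast.mpr h2
  have hmc3 : (m : ℤ) ∣ 2 * (n.choose 3 : ℤ) := by
    have := Int.natCast_dvd_natCast.mpr h3; push_cast at this; exact this
  have hcase : n % 6 = 0 ∨ n % 6 = 1 ∨ n % 6 = 2 ∨ n % 6 = 3 ∨ n % 6 = 4 ∨ n % 6 = 5 := by
    omega
  rcases hcase with h | h | h | h | h | h
  · -- n ≡ 0 [6]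
    rw [hg, h, show Nat.gcd 0 6 = 6 from rfl]
    set T := n / 6 with hT
    have hn6 : n = 6 * T := by omega
    have hNZ : (n : ℤ) = 6 * (T : ℤ) := by exact_mod_cast congrArg (Nat.cast (R := ℤ)) hn6
    have hc2 := choose_two_int n hn
    have hc3 := choose_three_int n (by omega)
    rw [hNZ] at hc2 hc3
    have hch2 : (n.choose 2 : ℤ) = 3 * T * (6 * T - 1) :=
      mul_left_cancel₀ (by norm_num : (2:ℤ) ≠ 0) (by linear_combination hc2)
    have hch3 : 2 * (n.choose 3 : ℤ) = 2 * T * (6 * T - 1) * (6 * T - 2) :=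
      mul_left_cancel₀ (by norm_num : (3:ℤ) ≠ 0) (by linear_combination hc3)
    have key : (T : ℤ) = (n.choose 2 : ℤ) + 2 * (n.choose 3 : ℤ)
        - (12 * T ^ 2 - 3 * T) * (n : ℤ) := by
      rw [hch2, hch3, hNZ]; ring
    have : (m : ℤ) ∣ (T : ℤ) := by
      rw [key]
      exact dvd_sub (dvd_add hmc2 hmc3) (Dvd.dvd.mul_left hmn _)
    exact_mod_cast this
  · rw [hg, h, show Nat.gcd 1 6 = 1 from rfl, Nat.div_one]; exact h1
  · -- n ≡ 2 [6]
    rw [hg, h, show Nat.gcd 2 6 = 2 from rfl]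
    set T := n / 2 with hT
    have hn2 : n = 2 * T := by omega
    have hNZ : (n : ℤ) = 2 * (T : ℤ) := by exact_mod_cast congrArg (Nat.cast (R := ℤ)) hn2
    have hc2 := choose_two_int n hn
    rw [hNZ] at hc2
    have hch2 : (n.choose 2 : ℤ) = T * (2 * T - 1) :=
      mul_left_cancel₀ (by norm_num : (2:ℤ) ≠ 0) (by linear_combination hc2)
    have key : (T : ℤ) = (n.choose 2 : ℤ) - ((T : ℤ) - 1) * (n : ℤ) := by
      rw [hch2, hNZ]; ring
    have : (m : ℤ) ∣ (T : ℤ) := by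
      rw [key]; exact dvd_sub hmc2 (Dvd.dvd.mul_left hmn _)
    exact_mod_cast this
  · -- n ≡ 3 [6]
    rw [hg, h, show Nat.gcd 3 6 = 3 from rfl]
    set T := n / 3 with hT
    have hn3 : n = 3 * T := by omega
    have hNZ : (n : ℤ) = 3 * (T : ℤ) := by exact_mod_cast congrArg (Nat.cast (R := ℤ)) hn3
    have hc3 := choose_three_int n (by omega)
    rw [hNZ] at hc3
    have hch3 : 2 * (n.choose 3 : ℤ) = T * (3 * T - 1) * (3 * T - 2) :=
      mul_left_cancel₀ (by norm_num : (3:ℤ) ≠ 0) (by linear_combination hc3)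
    have key : (T : ℤ) = 2 * (2 * (n.choose 3 : ℤ))
        - (6 * T ^ 2 - 6 * T + 1) * (n : ℤ) := by
      rw [hch3, hNZ]; ring
    have : (m : ℤ) ∣ (T : ℤ) := by
      rw [key]; exact dvd_sub (Dvd.dvd.mul_left hmc3 2) (Dvd.dvd.mul_left hmn _)
    exact_mod_cast this
  · -- n ≡ 4 [6]
    rw [hg, h, show Nat.gcd 4 6 = 2 from rfl]
    set T := n / 2 with hT
    have hn2 : n = 2 * T := by omega
    have hNZ : (n : ℤ) = 2 * (T : ℤ) := by exact_mod_cast congrArg (Nat.cast (R := ℤ)) hn2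
    have hc2 := choose_two_int n hn
    rw [hNZ] at hc2
    have hch2 : (n.choose 2 : ℤ) = T * (2 * T - 1) :=
      mul_left_cancel₀ (by norm_num : (2:ℤ) ≠ 0) (by linear_combination hc2)
    have key : (T : ℤ) = (n.choose 2 : ℤ) - ((T : ℤ) - 1) * (n : ℤ) := by
      rw [hch2, hNZ]; ring
    have : (m : ℤ) ∣ (T : ℤ) := by
      rw [key]; exact dvd_sub hmc2 (Dvd.dvd.mul_left hmn _)
    exact_mod_cast this
  · rw [hg, h, show Nat.gcd 5 6 = 1 from rfl, Nat.div_one]; exact h1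

end Numeric

section MainLemma
variable {Q : Type*} [Group Q]

lemma d_pow (n : ℕ) (hn : 1 ≤ n)
    (hc : ∀ p q r s : Q, commP (commP p q) r * s = s * commP (commP p q) r)
    (hexp : ∀ q : Q, q ^ n = 1) (a b : Q) :
    (commP (commP a b) a) ^ (n / Nat.gcd n 6) = 1 := by
  have hd : ∀ s : Q, commP (commP a b) a * s = s * commP (commP a b) a := hc a b a
  have he : ∀ s : Q, commP (commP a b) b * s = s * commP (commP a b) b := hc a b b
  have he' : ∀ s : Q, (commP (commP a b) b)⁻¹ * s = s * (commP (commP a b) b)⁻¹ :=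
    central_inv _ he
  -- d ^ C(n,2) = 1
  have h1 : (commP a b) ^ n * (commP (commP a b) a) ^ (n.choose 2) = 1 := by
    have h := commP_pow_left hc a b n
    rw [hexp a, commP_one_left] at h
    exact h.symm
  have hcn : (commP a b) ^ n = 1 := hexp (commP a b)
  have hd2 : (commP (commP a b) a) ^ (n.choose 2) = 1 := by
    rw [hcn, one_mul] at h1; exact h1
  -- rel1 from (a*b)^n
  have rel1 : ((commP a b)⁻¹) ^ (n.choose 2) * ((commP (commP a b) a)⁻¹) ^ (n.choose 3) *
      ((commP (commP a b) b)⁻¹) ^ (2 * n.choose 3 + n.choose 2) = 1 := by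
    have h := mul_pow_expand hc a b n
    rw [hexp (a * b), hexp a, hexp b, one_mul, one_mul] at h
    exact h.symm
  -- rel2 from (a*(a*b))^n
  have i1 : commP a (a * b) = commP a b := by simp only [commP]; group
  have i2 : commP (commP a b) (a * b) = commP (commP a b) b * commP (commP a b) a := by
    have hkey : a⁻¹ * commP a b * a = commP a b * commP (commP a b) a :=
      conj_eq_mul_commP (commP a b) a
    calc commP (commP a b) (a * b)
        = (commP a b)⁻¹ * b⁻¹ * (a⁻¹ * commP a b * a) * b := by
          simp only [commP]; group
      _ = (commP a b)⁻¹ * b⁻¹ * (commP a b * commP (commP a b) a) * b := by rw [hkey]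
      _ = (commP a b)⁻¹ * b⁻¹ * commP a b * (commP (commP a b) a * b) := by group
      _ = (commP a b)⁻¹ * b⁻¹ * commP a b * (b * commP (commP a b) a) := by rw [hd b]
      _ = ((commP a b)⁻¹ * b⁻¹ * commP a b * b) * commP (commP a b) a := by group
      _ = commP (commP a b) b * commP (commP a b) a := by simp only [commP]
  have rel2 : ((commP a b)⁻¹) ^ (n.choose 2) * ((commP (commP a b) a)⁻¹) ^ (n.choose 3) *
      ((commP (commP a b) b * commP (commP a b) a)⁻¹) ^ (2 * n.choose 3 + n.choose 2)
      = 1 := by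
    have h := mul_pow_expand hc a (a * b) n
    rw [i1] at h
    rw [i2] at h
    rw [hexp (a * (a * b)), hexp a, hexp (a * b), one_mul, one_mul] at h
    exact h.symm
  -- combine rel1, rel2 to get d ^ eps = 1
  have hsplit : ((commP (commP a b) b * commP (commP a b) a)⁻¹) ^
        (2 * n.choose 3 + n.choose 2)
      = ((commP (commP a b) a)⁻¹) ^ (2 * n.choose 3 + n.choose 2) *
        ((commP (commP a b) b)⁻¹) ^ (2 * n.choose 3 + n.choose 2) := by
    rw [mul_inv_rev]
    exact Commute.mul_pow (Commute.inv_inv (he (commP (commP a b) a)).symm) _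
  have hdeps : (commP (commP a b) a) ^ (2 * n.choose 3 + n.choose 2) = 1 := by
    have r2 := rel2
    rw [hsplit] at r2
    rw [mul_eq_one_iff_eq_inv.mp rel1] at r2
    rw [show ((commP (commP a b) a)⁻¹) ^ (2 * n.choose 3 + n.choose 2) *
          ((commP (commP a b) b)⁻¹) ^ (2 * n.choose 3 + n.choose 2)
        = ((commP (commP a b) b)⁻¹) ^ (2 * n.choose 3 + n.choose 2) *
          ((commP (commP a b) a)⁻¹) ^ (2 * n.choose 3 + n.choose 2) from
      (central_pow _ he' (2 * n.choose 3 + n.choose 2)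
        (((commP (commP a b) a)⁻¹) ^ (2 * n.choose 3 + n.choose 2))).symm] at r2
    rw [inv_mul_cancel_left] at r2
    rw [inv_pow, inv_eq_one] at r2
    exact r2
  -- conclude via orders
  have o1 : orderOf (commP (commP a b) a) ∣ n :=
    orderOf_dvd_of_pow_eq_one (hexp _)
  have o2 : orderOf (commP (commP a b) a) ∣ n.choose 2 :=
    orderOf_dvd_of_pow_eq_one hd2
  have o3 : orderOf (commP (commP a b) a) ∣ 2 * n.choose 3 + n.choose 2 :=
    orderOf_dvd_of_pow_eq_one hdeps
  have o4 : orderOf (commP (commP a b) a) ∣ 2 * n.choose 3 := by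
    have := Nat.dvd_sub o3 o2
    rwa [Nat.add_sub_cancel] at this
  exact orderOf_dvd_iff_pow_eq_one.mp (key_dvd n _ hn o1 o2 o4)

lemma e_pow (n : ℕ) (hn : 1 ≤ n)
    (hc : ∀ p q r s : Q, commP (commP p q) r * s = s * commP (commP p q) r)
    (hexp : ∀ q : Q, q ^ n = 1) (a b : Q) :
    (commP (commP a b) b) ^ (n / Nat.gcd n 6) = 1 := by
  have h := d_pow n hn hc hexp b a
  rw [commP_swap a b] at h
  rw [commP_inv_left (commP a b) b (hc a b b)] at h
  rwa [inv_pow, inv_eq_one] at h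

end MainLemma


lemma powSubgroup_normal (G : Type*) [Group G] (n : ℕ) : (powSubgroup G n).Normal := by
  constructor
  intro x hx g
  refine Subgroup.closure_induction (fun y hy => ?_) ?_ (fun u v _ _ hu hv => ?_)
    (fun u _ hu => ?_) hx
  · obtain ⟨h, rfl⟩ := hy
    exact Subgroup.subset_closure ⟨g * h * g⁻¹, by rw [conj_pow]⟩
  · simpa using (powSubgroup G n).one_mem
  · have hm := mul_mem hu hv
    convert hm using 1
    group
  · have hm := inv_mem hu
    convert hm using 1
    group

open scoped commutatorElement in
theorem triple_comm_pow_n6_mem (n : ℕ) (hn : 1 ≤ n) :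
    let G := FreeGroup (Fin 2)
    let x : G := FreeGroup.of 0
    let y : G := FreeGroup.of 1
    (commP (commP x y) x) ^ (n / Nat.gcd n 6)
        ∈ Subgroup.lowerCentralSeries (⊤ : Subgroup G) 3 ⊔ powSubgroup G n ∧
      (commP (commP x y) y) ^ (n / Nat.gcd n 6)
        ∈ Subgroup.lowerCentralSeries (⊤ : Subgroup G) 3 ⊔ powSubgroup G n := by
  intro G x y
  haveI hnP : (powSubgroup G n).Normal := powSubgroup_normal G n
  haveI hH : (Subgroup.lowerCentralSeries (⊤ : Subgroup G) 3 ⊔ powSubgroup G n).Normal :=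
    Subgroup.sup_normal _ _
  set H : Subgroup G := Subgroup.lowerCentralSeries (⊤ : Subgroup G) 3 ⊔ powSubgroup G n with hHdef
  have hmkc : ∀ a b : G, ((commP a b : G) : G ⧸ H)
      = commP (a : G ⧸ H) (b : G ⧸ H) := by
    intro a b
    simp [commP]
  have hcQ : ∀ p q r s : G ⧸ H,
      commP (commP p q) r * s = s * commP (commP p q) r := by
    intro p q r s
    refine QuotientGroup.induction_on p fun p => QuotientGroup.induction_on q fun q =>
      QuotientGroup.induction_on r fun r => QuotientGroup.induction_on s fun s => ?_
    rw [← hmkc, ← hmkc, ← QuotientGroup.mk_mul, ← QuotientGroup.mk_mul]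
    rw [QuotientGroup.eq]
    rw [show (commP (commP p q) r * s)⁻¹ * (s * commP (commP p q) r)
        = (⁅(commP (commP p q) r)⁻¹, s⁻¹⁆)⁻¹ from by
      unfold G at *
      simp only [commP, commutatorElement_def]; group]
    have h1 : commP p q ∈ Subgroup.lowerCentralSeries (⊤ : Subgroup G) 1 := by
      rw [show commP p q = ⁅p⁻¹, q⁻¹⁆ from by
        simp +zetaDelta only [commP, commutatorElement_def, inv_inv]]
      exact Subgroup.commutator_mem_commutator (Subgroup.mem_top _) (Subgroup.mem_top _)
    have h2 : commP (commP p q) r ∈ Subgroup.lowerCentralSeries (⊤ : Subgroup G) 2 := by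
      rw [show commP (commP p q) r = ⁅(commP p q)⁻¹, r⁻¹⁆ from by
        simp +zetaDelta only [commP, commutatorElement_def, inv_inv]]
      exact Subgroup.commutator_mem_commutator (inv_mem h1) (Subgroup.mem_top _)
    have h3 : (⁅(commP (commP p q) r)⁻¹, s⁻¹⁆)⁻¹ ∈ Subgroup.lowerCentralSeries (⊤ : Subgroup G) 3 :=
      inv_mem (Subgroup.commutator_mem_commutator (inv_mem h2) (Subgroup.mem_top _))
    exact Subgroup.mem_sup_left h3
  have hexpQ : ∀ q : G ⧸ H, q ^ n = 1 := by
    intro q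
    refine QuotientGroup.induction_on q fun g => ?_
    rw [← QuotientGroup.mk_pow, QuotientGroup.eq_one_iff]
    exact Subgroup.mem_sup_right (Subgroup.subset_closure ⟨g, rfl⟩)
  constructor
  · rw [← QuotientGroup.eq_one_iff ((commP (commP x y) x) ^ (n / Nat.gcd n 6))]
    rw [QuotientGroup.mk_pow, hmkc, hmkc]
    exact d_pow n hn hcQ hexpQ _ _
  · rw [← QuotientGroup.eq_one_iff ((commP (commP x y) y) ^ (n / Nat.gcd n 6))]
    rw [QuotientGroup.mk_pow, hmkc, hmkc]
    exact e_pow n hn hcQ hexpQ _ _
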